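/- Let J₀(x) = Σ_{m=0}^∞ (−1)^m (x/2)^{2m} / (m!)² be the Bessel function of the first kind of order zero. Then for all x ≥ 0, |J₀(x)| ≤ (1 + x²)^{−1/4}. -/

import Mathlib

open Real

/-- The Bessel function of the first kind of order zero,
`J₀(x) = Σ_{m=0}^∞ (−1)^m (x/2)^{2m} / (m!)²`. -/
noncomputable def besselJ0 (x : ℝ) : ℝ :=
  ∑' m : ℕ, (-1)^m * (x/2)^(2*m) / (Nat.factorial m : ℝ)^2

noncomputable def besselJ1 (x : ℝ) : ℝ :=
  ∑' m : ℕ, (-1)^m * (x/2)^(2*m+1) / ((Nat.factorial m : ℝ) * (Nat.factorial (m+1) : ℝ))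

set_option linter.all false

lemma fact_cast_pos (m : ℕ) : (0:ℝ) < (Nat.factorial m : ℝ) := by
  exact_mod_cast Nat.factorial_pos m

lemma one_le_fact_cast (m : ℕ) : (1:ℝ) ≤ (Nat.factorial m : ℝ) := by
  exact_mod_cast Nat.one_le_iff_ne_zero.2 (Nat.factorial_ne_zero m)

lemma J0_term_norm (x : ℝ) (m : ℕ) :
    ‖(-1:ℝ)^m * (x/2)^(2*m) / (Nat.factorial m : ℝ)^2‖
      = ((x/2)^2)^m / (Nat.factorial m : ℝ)^2 := by
  rw [norm_div, norm_mul, norm_pow, norm_neg, norm_one, one_pow, one_mul]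
  rw [Real.norm_eq_abs, Real.norm_eq_abs, abs_pow, pow_mul, sq_abs,
    abs_of_pos (by positivity : (0:ℝ) < (Nat.factorial m : ℝ)^2)]

lemma summable_J0_terms (x : ℝ) :
    Summable (fun m : ℕ => (-1:ℝ)^m * (x/2)^(2*m) / (Nat.factorial m : ℝ)^2) := by
  apply Summable.of_norm_bounded (g := fun m => ((x/2)^2)^m / (Nat.factorial m : ℝ))
    (Real.summable_pow_div_factorial ((x/2)^2))
  intro m
  rw [J0_term_norm]
  apply div_le_div_of_nonneg_left (by positivity) (fact_cast_pos m)
  nlinarith [one_le_fact_cast m, fact_cast_pos m]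

lemma J1_term_norm (x : ℝ) (m : ℕ) :
    ‖(-1:ℝ)^m * (x/2)^(2*m+1) / ((Nat.factorial m : ℝ) * (Nat.factorial (m+1) : ℝ))‖
      = |x/2| * ((x/2)^2)^m / ((Nat.factorial m : ℝ) * (Nat.factorial (m+1) : ℝ)) := by
  rw [norm_div, norm_mul, norm_pow, norm_neg, norm_one, one_pow, one_mul]
  rw [Real.norm_eq_abs, Real.norm_eq_abs, abs_pow, pow_succ, pow_mul, sq_abs,
    abs_of_pos (by positivity : (0:ℝ) < (Nat.factorial m : ℝ) * (Nat.factorial (m+1) : ℝ))]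
  ring

lemma summable_J1_terms (x : ℝ) :
    Summable (fun m : ℕ =>
      (-1:ℝ)^m * (x/2)^(2*m+1) / ((Nat.factorial m : ℝ) * (Nat.factorial (m+1) : ℝ))) := by
  apply Summable.of_norm_bounded (g := fun m => |x/2| * (((x/2)^2)^m / (Nat.factorial m : ℝ)))
    ((Real.summable_pow_div_factorial ((x/2)^2)).mul_left _)
  intro m
  rw [J1_term_norm, mul_div_assoc]
  apply mul_le_mul_of_nonneg_left _ (abs_nonneg _)
  apply div_le_div_of_nonneg_left (by positivity) (fact_cast_pos m)
  nlinarith [one_le_fact_cast m, one_le_fact_cast (m+1), fact_cast_pos m, fact_cast_pos (m+1)]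

lemma fact_add_ge (n k : ℕ) : (Nat.factorial n) * (n+1)^k ≤ Nat.factorial (k+n) := by
  induction k with
  | zero => simp
  | succ k ih =>
    calc Nat.factorial n * (n+1)^(k+1) = (Nat.factorial n * (n+1)^k) * (n+1) := by ring
    _ ≤ Nat.factorial (k+n) * (n+1) := Nat.mul_le_mul_right _ ih
    _ ≤ Nat.factorial (k+n) * (k+n+1) := by gcongr <;> omega
    _ = Nat.factorial (k+1+n) := by
        have : k+1+n = (k+n)+1 := by omega
        rw [this, Nat.factorial_succ]; ring

lemma tsum_tail_bound (a : ℕ → ℝ) (ha : Summable a) (n : ℕ) (D r : ℝ) (hr0 : 0 ≤ r)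
    (hr1 : r < 1) (hD : 0 ≤ D) (h : ∀ k, |a (k+n)| ≤ D * r^k) :
    |(∑' m, a m) - ∑ i ∈ Finset.range n, a i| ≤ D / (1-r) := by
  have hsplit := ha.sum_add_tsum_nat_add n
  have htail : (∑' m, a m) - ∑ i ∈ Finset.range n, a i = ∑' k, a (k+n) := by
    rw [← hsplit]; ring
  rw [htail]
  have hgeo : Summable (fun k : ℕ => D * r^k) :=
    (summable_geometric_of_lt_one hr0 hr1).mul_left D
  have hnormsum : Summable (fun k => ‖a (k+n)‖) := by
    apply Summable.of_nonneg_of_le (fun k => norm_nonneg _) _ hgeo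
    intro k
    simpa using h k
  calc |∑' k, a (k+n)| ≤ ∑' k, ‖a (k+n)‖ := norm_tsum_le_tsum_norm hnormsum
    _ ≤ ∑' k : ℕ, D * r^k := by
        apply Summable.tsum_le_tsum _ hnormsum hgeo
        intro k; simpa using h k
    _ = D * (1-r)⁻¹ := by rw [tsum_mul_left, tsum_geometric_of_lt_one hr0 hr1]
    _ = D / (1-r) := by ring


lemma J0_two_bounds : 0 ≤ besselJ0 2 ∧ besselJ0 2 ≤ 0.225 := by
  have key : |besselJ0 2 - ∑ i ∈ Finset.range 4,
      ((-1:ℝ)^i * ((2:ℝ)/2)^(2*i) / (Nat.factorial i : ℝ)^2)| ≤ (1/576) / (1-1/25) := by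
    apply tsum_tail_bound _ (summable_J0_terms 2) 4 (1/576) (1/25) (by norm_num) (by norm_num)
      (by norm_num)
    intro k
    have hf := fact_add_ge 4 k
    have hf' : (24:ℝ) * 5^k ≤ (Nat.factorial (k+4) : ℝ) := by exact_mod_cast hf
    have hfp : (0:ℝ) < (Nat.factorial (k+4) : ℝ) := fact_cast_pos _
    have habs : |(-1:ℝ)^(k+4) * ((2:ℝ)/2)^(2*(k+4)) / (Nat.factorial (k+4) : ℝ)^2|
        = 1 / (Nat.factorial (k+4) : ℝ)^2 := by
      rw [← Real.norm_eq_abs, J0_term_norm]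
      norm_num
    rw [habs]
    have h576 : (576:ℝ) * 25^k ≤ ((Nat.factorial (k+4) : ℝ))^2 := by
      have h5 : (0:ℝ) ≤ (24:ℝ) * 5^k := by positivity
      have heq : (576:ℝ)*25^k = (24*5^k)^2 := by
        rw [show (25:ℝ)=5*5 from by norm_num, mul_pow]; ring
      rw [heq]
      exact pow_le_pow_left₀ h5 hf' 2
    have hrw : (1:ℝ)/576 * (1/25)^k = 1 / (576 * 25^k) := by
      rw [one_div_pow, one_div_mul_one_div]
    rw [hrw]
    apply one_div_le_one_div_of_le (by positivity) h576
  have hps : ∑ i ∈ Finset.range 4, ((-1:ℝ)^i * ((2:ℝ)/2)^(2*i) / (Nat.factorial i : ℝ)^2)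
      = 2/9 := by
    norm_num [Finset.sum_range_succ, Nat.factorial]
  rw [hps] at key
  rw [abs_le] at key
  constructor <;> [linarith [key.1]; · norm_num at key ⊢; linarith [key.2]]

lemma J1_two_bounds : 0 ≤ besselJ1 2 ∧ besselJ1 2 ≤ 0.578 := by
  have key : |besselJ1 2 - ∑ i ∈ Finset.range 4,
      ((-1:ℝ)^i * ((2:ℝ)/2)^(2*i+1) / ((Nat.factorial i : ℝ) * (Nat.factorial (i+1) : ℝ)))|
      ≤ (1/2880) / (1-1/25) := by
    apply tsum_tail_bound _ (summable_J1_terms 2) 4 (1/2880) (1/25) (by norm_num) (by norm_num)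
      (by norm_num)
    intro k
    have hf4 : (24:ℝ) * 5^k ≤ (Nat.factorial (k+4) : ℝ) := by exact_mod_cast fact_add_ge 4 k
    have hf5 : (120:ℝ) * 6^k ≤ (Nat.factorial (k+5) : ℝ) := by exact_mod_cast fact_add_ge 5 k
    have h56 : (5:ℝ)^k ≤ 6^k := by
      apply pow_le_pow_left₀ <;> norm_num
    have habs : |(-1:ℝ)^(k+4) * ((2:ℝ)/2)^(2*(k+4)+1)
        / ((Nat.factorial (k+4) : ℝ) * (Nat.factorial (k+4+1) : ℝ))|
        = 1 / ((Nat.factorial (k+4) : ℝ) * (Nat.factorial (k+5) : ℝ)) := by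
      have h45 : k+4+1 = k+5 := by omega
      rw [h45, abs_div, abs_mul, abs_pow, abs_neg, abs_one, one_pow, one_mul]
      rw [abs_of_pos (by positivity : (0:ℝ) < (Nat.factorial (k+4) : ℝ) * (Nat.factorial (k+5) : ℝ))]
      norm_num
    have h45 : k+4+1 = k+5 := by omega
    rw [habs]
    have hbig : (2880:ℝ) * 25^k ≤ (Nat.factorial (k+4) : ℝ) * (Nat.factorial (k+5) : ℝ) := by
      have h1 : (0:ℝ) ≤ (24:ℝ)*5^k := by positivity
      have h2 : (120:ℝ)*5^k ≤ (Nat.factorial (k+5) : ℝ) := by nlinarith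
      have h3 : ((24:ℝ)*5^k) * ((120:ℝ)*5^k) ≤ (Nat.factorial (k+4) : ℝ) * (Nat.factorial (k+5) : ℝ) := by
        apply mul_le_mul hf4 h2 (by positivity) (le_of_lt (fact_cast_pos _))
      calc (2880:ℝ) * 25^k = ((24:ℝ)*5^k) * ((120:ℝ)*5^k) := by
            rw [show (25:ℝ) = 5*5 by norm_num, mul_pow]; ring
        _ ≤ _ := h3
    have hrw : (1:ℝ)/2880 * (1/25)^k = 1 / (2880 * 25^k) := by
      rw [one_div_pow, one_div_mul_one_div]
    rw [hrw]
    apply one_div_le_one_div_of_le (by positivity) hbig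
  have hps : ∑ i ∈ Finset.range 4,
      ((-1:ℝ)^i * ((2:ℝ)/2)^(2*i+1) / ((Nat.factorial i : ℝ) * (Nat.factorial (i+1) : ℝ)))
      = 83/144 := by
    norm_num [Finset.sum_range_succ, Nat.factorial]
  rw [hps] at key
  rw [abs_le] at key
  constructor <;> [linarith [key.1]; · norm_num at key ⊢; linarith [key.2]]

lemma J0_approx {x : ℝ} (h0 : 0 ≤ x) (h2 : x ≤ 2) :
    |besselJ0 x - (1 - x^2/4 + x^4/64)| ≤ (x^2/4)^3 * (4/135) := by
  set t : ℝ := x^2/4 with ht_def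
  have ht0 : 0 ≤ t := by positivity
  have ht1 : t ≤ 1 := by rw [ht_def]; nlinarith
  have key : |besselJ0 x - ∑ i ∈ Finset.range 3,
      ((-1:ℝ)^i * (x/2)^(2*i) / (Nat.factorial i : ℝ)^2)| ≤ (t^3/36) / (1-1/16) := by
    apply tsum_tail_bound _ (summable_J0_terms x) 3 (t^3/36) (1/16) (by norm_num) (by norm_num)
      (by positivity)
    intro k
    have hf : (6:ℝ) * 4^k ≤ (Nat.factorial (k+3) : ℝ) := by exact_mod_cast fact_add_ge 3 k
    have hfp : (0:ℝ) < (Nat.factorial (k+3) : ℝ) := fact_cast_pos _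
    have habs : |(-1:ℝ)^(k+3) * (x/2)^(2*(k+3)) / (Nat.factorial (k+3) : ℝ)^2|
        = t^(k+3) / (Nat.factorial (k+3) : ℝ)^2 := by
      rw [← Real.norm_eq_abs, J0_term_norm]
      rw [ht_def]
      norm_num [div_pow]
    rw [habs]
    have hpow : t^(k+3) ≤ t^3 * (1:ℝ)^k := by
      rw [one_pow, mul_one]
      exact pow_le_pow_of_le_one ht0 ht1 (by omega)
    have hfk : (36:ℝ) * 16^k ≤ ((Nat.factorial (k+3) : ℝ))^2 := by
      have heq : (36:ℝ)*16^k = (6*4^k)^2 := by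
        rw [show (16:ℝ)=4*4 from by norm_num, mul_pow]; ring
      rw [heq]
      exact pow_le_pow_left₀ (by positivity) hf 2
    calc t^(k+3) / (Nat.factorial (k+3) : ℝ)^2 ≤ t^3 / (36 * 16^k) := by
          apply div_le_div₀ (by positivity) _ (by positivity) hfk
          rw [one_pow, mul_one] at hpow; exact hpow
      _ = t^3/36 * (1/16)^k := by
          rw [one_div_pow]
          field_simp
  have hps : ∑ i ∈ Finset.range 3, ((-1:ℝ)^i * (x/2)^(2*i) / (Nat.factorial i : ℝ)^2)
      = 1 - x^2/4 + x^4/64 := by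
    norm_num [Finset.sum_range_succ, Nat.factorial]
    ring
  rw [hps] at key
  calc |besselJ0 x - (1 - x^2/4 + x^4/64)| ≤ (t^3/36) / (1-1/16) := key
    _ = t^3 * (4/135) := by ring

lemma hasDerivAt_J0 (x : ℝ) : HasDerivAt besselJ0 (-besselJ1 x) x := by
  set R : ℝ := |x| + 4 with hR
  have hR1 : (1:ℝ) ≤ R := by have := abs_nonneg x; linarith
  have hR0 : (0:ℝ) < R := by positivity
  have hx : x ∈ Set.Ioo (-R) R := by
    constructor <;> cases abs_cases x <;> simp_all <;> linarith
  set g : ℕ → ℝ → ℝ := fun m y => (-1:ℝ)^m * (y/2)^(2*m) / (Nat.factorial m : ℝ)^2 with hg_def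
  set g' : ℕ → ℝ → ℝ := fun m y =>
    (-1:ℝ)^m * ((2*m : ℕ) * (y/2)^(2*m-1) * (1/2) / (Nat.factorial m : ℝ)^2) with hg'_def
  set u : ℕ → ℝ := fun m => R * ((2*R^2)^m / (Nat.factorial m : ℝ)) with hu_def
  have hu : Summable u := (Real.summable_pow_div_factorial (2*R^2)).mul_left R
  have hg : ∀ m y, y ∈ Set.Ioo (-R) R → HasDerivAt (g m) (g' m y) y := by
    intro m y _
    have h1 : HasDerivAt (fun y : ℝ => y/2) (1/2) y := (hasDerivAt_id y).div_const 2
    have h2 := ((h1.fun_pow (2*m)).div_const ((Nat.factorial m : ℝ)^2)).const_mul ((-1:ℝ)^m)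
    exact h2.congr_of_eventuallyEq (Filter.Eventually.of_forall fun z => by simp only [hg_def]; ring)
  have hg'le : ∀ m y, y ∈ Set.Ioo (-R) R → ‖g' m y‖ ≤ u m := by
    intro m y hy
    have hy2 : |y/2| ≤ R := by
      rw [abs_div]
      have : |y| ≤ R := by
        rw [abs_le]; exact ⟨hy.1.le, hy.2.le⟩
      simp only [abs_two]
      linarith
    have hnorm : ‖g' m y‖ = (2*m : ℝ) * |y/2|^(2*m-1) * (1/2) / (Nat.factorial m : ℝ)^2 := by
      simp [hg'_def, Real.norm_eq_abs, abs_mul, abs_div, abs_pow, abs_neg, abs_one,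
        Nat.abs_cast, abs_two]
    rw [hnorm]
    rcases Nat.eq_zero_or_pos m with hm | hm
    · subst hm; simp [hu_def]; exact hR0.le
    · have hstep1 : |y/2|^(2*m-1) ≤ R^(2*m) := by
        calc |y/2|^(2*m-1) ≤ R^(2*m-1) := pow_le_pow_left₀ (abs_nonneg _) hy2 _
        _ ≤ R^(2*m) := pow_le_pow_right₀ hR1 (Nat.sub_le _ _)
      have hm2 : (m:ℝ) ≤ 2^m := by exact_mod_cast (Nat.lt_two_pow_self (n := m)).le
      have hf1 : (1:ℝ) ≤ (Nat.factorial m : ℝ) := one_le_fact_cast m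
      have hf0 : (0:ℝ) < (Nat.factorial m : ℝ) := fact_cast_pos m
      calc (2*m : ℝ) * |y/2|^(2*m-1) * (1/2) / (Nat.factorial m : ℝ)^2
          = (m:ℝ) * |y/2|^(2*m-1) / (Nat.factorial m : ℝ)^2 := by ring
        _ ≤ (m:ℝ) * R^(2*m) / (Nat.factorial m : ℝ)^2 := by
            gcongr
        _ ≤ 2^m * R^(2*m) / (Nat.factorial m : ℝ) := by
            rw [div_le_div_iff₀ (by positivity) (by positivity)]
            have h2m : (0:ℝ) ≤ R^(2*m) := by positivity
            have hsq : (Nat.factorial m : ℝ) ≤ (Nat.factorial m : ℝ)^2 := by nlinarith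
            exact mul_le_mul (mul_le_mul_of_nonneg_right hm2 h2m) hsq (le_of_lt hf0)
              (by positivity)
        _ = (2*R^2)^m / (Nat.factorial m : ℝ) := by
            rw [mul_pow, ← pow_mul]
        _ ≤ u m := by
            rw [hu_def]
            have : (0:ℝ) ≤ (2*R^2)^m / (Nat.factorial m : ℝ) := by positivity
            nlinarith
  have hg0 : Summable (fun m => g m x) := summable_J0_terms x
  have hkey := hasDerivAt_tsum_of_isPreconnected hu isOpen_Ioo
    (convex_Ioo (-R) R).isPreconnected hg hg'le hx hg0 hx
  have hfun : (fun z => ∑' m, g m z) = besselJ0 := rfl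
  rw [hfun] at hkey
  have hsum' : Summable (fun m => g' m x) :=
    Summable.of_norm_bounded (g := u) hu (fun m => hg'le m x hx)
  have hre : ∑' m, g' m x = -besselJ1 x := by
    rw [hsum'.tsum_eq_zero_add]
    have h0 : g' 0 x = 0 := by simp [hg'_def]
    rw [h0, zero_add]
    have hterm : ∀ k : ℕ, g' (k+1) x
        = -((-1:ℝ)^k * (x/2)^(2*k+1) / ((Nat.factorial k : ℝ) * (Nat.factorial (k+1) : ℝ))) := by
      intro k
      have he : 2*(k+1)-1 = 2*k+1 := by omega
      rw [hg'_def]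
      simp only [he]
      have hfs : (Nat.factorial (k+1) : ℝ) = (k+1) * (Nat.factorial k : ℝ) := by
        rw [Nat.factorial_succ]; push_cast; ring
      rw [pow_succ, hfs]
      have hk0 : (0:ℝ) < (Nat.factorial k : ℝ) := fact_cast_pos k
      have hk1 : (0:ℝ) < (k:ℝ)+1 := by positivity
      push_cast
      field_simp
    rw [tsum_congr hterm, tsum_neg]
    rfl
  rw [hre] at hkey
  exact hkey

lemma hasDerivAt_xJ1 (x : ℝ) : HasDerivAt (fun y => y * besselJ1 y) (x * besselJ0 x) x := by
  set R : ℝ := |x| + 4 with hR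
  have hR1 : (1:ℝ) ≤ R := by have := abs_nonneg x; linarith
  have hR0 : (0:ℝ) < R := by linarith
  have hx : x ∈ Set.Ioo (-R) R := by
    constructor <;> cases abs_cases x <;> simp_all <;> linarith
  set G : ℕ → ℝ → ℝ := fun m y =>
    (-1:ℝ)^m * 2 * (y/2)^(2*m+2) / ((Nat.factorial m : ℝ) * (Nat.factorial (m+1) : ℝ))
    with hG_def
  set G' : ℕ → ℝ → ℝ := fun m y =>
    ((-1:ℝ)^m * 2) * ((2*m+2 : ℕ) * (y/2)^(2*m+2-1) * (1/2)
      / ((Nat.factorial m : ℝ) * (Nat.factorial (m+1) : ℝ))) with hG'_def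
  set u : ℕ → ℝ := fun m => (2*R^2) * ((R^2)^m / (Nat.factorial m : ℝ)) with hu_def
  have hu : Summable u := (Real.summable_pow_div_factorial (R^2)).mul_left (2*R^2)
  have hfs : ∀ m : ℕ, (Nat.factorial (m+1) : ℝ) = ((m:ℝ)+1) * (Nat.factorial m : ℝ) := by
    intro m; rw [Nat.factorial_succ]; push_cast; ring
  have hG : ∀ m y, y ∈ Set.Ioo (-R) R → HasDerivAt (G m) (G' m y) y := by
    intro m y _
    have h1 : HasDerivAt (fun y : ℝ => y/2) (1/2) y := (hasDerivAt_id y).div_const 2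
    have h2 := ((h1.fun_pow (2*m+2)).div_const
      ((Nat.factorial m : ℝ) * (Nat.factorial (m+1) : ℝ))).const_mul ((-1:ℝ)^m * 2)
    exact h2.congr_of_eventuallyEq (Filter.Eventually.of_forall fun z => by simp only [hG_def]; ring)
  have he : ∀ m : ℕ, 2*m+2-1 = 2*m+1 := fun m => by omega
  have hG'le : ∀ m y, y ∈ Set.Ioo (-R) R → ‖G' m y‖ ≤ u m := by
    intro m y hy
    have hy2 : |y/2| ≤ R := by
      rw [abs_div]
      have : |y| ≤ R := by rw [abs_le]; exact ⟨hy.1.le, hy.2.le⟩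
      simp only [abs_two]; linarith
    have hf0 : (0:ℝ) < (Nat.factorial m : ℝ) := fact_cast_pos m
    have hf1 : (1:ℝ) ≤ (Nat.factorial m : ℝ) := one_le_fact_cast m
    have hnorm : ‖G' m y‖ = 2 * ((2*(m:ℝ)+2) * |y/2|^(2*m+1) * (1/2)
        / ((Nat.factorial m : ℝ) * (Nat.factorial (m+1) : ℝ))) := by
      rw [hG'_def]
      simp only [he m]
      rw [Real.norm_eq_abs, abs_mul, abs_mul, abs_pow, abs_neg, abs_one, one_pow, one_mul,
        abs_two, abs_div, abs_mul, abs_mul, abs_pow]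
      rw [abs_of_pos (by positivity : (0:ℝ) < (Nat.factorial m : ℝ) * (Nat.factorial (m+1) : ℝ))]
      push_cast
      rw [abs_of_nonneg (by positivity : (0:ℝ) ≤ 2*(m:ℝ)+2), abs_of_nonneg (by norm_num : (0:ℝ) ≤ (1:ℝ)/2)]
    rw [hnorm, hfs m]
    have hpow : |y/2|^(2*m+1) ≤ (R^2)^m * R := by
      calc |y/2|^(2*m+1) ≤ R^(2*m+1) := pow_le_pow_left₀ (abs_nonneg _) hy2 _
      _ = (R^2)^m * R := by rw [pow_succ, pow_mul]
    have hRR : (R^2)^m * R ≤ (R^2)^m * R^2 := by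
      have h1 : (0:ℝ) ≤ (R^2)^m := by positivity
      have h2 : R ≤ R^2 := by nlinarith
      exact mul_le_mul_of_nonneg_left h2 h1
    calc 2 * ((2*(m:ℝ)+2) * |y/2|^(2*m+1) * (1/2) / ((Nat.factorial m : ℝ) * (((m:ℝ)+1) * (Nat.factorial m : ℝ))))
        = 2 * |y/2|^(2*m+1) / (Nat.factorial m : ℝ)^2 := by
          field_simp
      _ ≤ 2 * ((R^2)^m * R^2) / (Nat.factorial m : ℝ)^2 := by
          gcongr
          exact hpow.trans hRR
      _ ≤ 2 * ((R^2)^m * R^2) / (Nat.factorial m : ℝ) := by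
          gcongr
          nlinarith
      _ = u m := by rw [hu_def]; ring
  have hG0 : Summable (fun m => G m x) := by
    apply ((summable_J1_terms x).mul_left x).congr
    intro m
    rw [hG_def]
    simp only []
    rw [pow_succ]
    field_simp
    ring
  have hkey := hasDerivAt_tsum_of_isPreconnected hu isOpen_Ioo
    (convex_Ioo (-R) R).isPreconnected hG hG'le hx hG0 hx
  have hfun : (fun z => ∑' m, G m z) = (fun y => y * besselJ1 y) := by
    funext z
    rw [besselJ1, ← tsum_mul_left]
    apply tsum_congr
    intro m
    rw [hG_def]
    simp only []
    rw [pow_succ]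
    field_simp
  rw [hfun] at hkey
  have hre : ∑' m, G' m x = x * besselJ0 x := by
    rw [besselJ0, ← tsum_mul_left]
    apply tsum_congr
    intro m
    rw [hG'_def]
    simp only [he m]
    rw [hfs m, pow_succ]
    have hf0 : (0:ℝ) < (Nat.factorial m : ℝ) := fact_cast_pos m
    push_cast
    field_simp
  rw [hre] at hkey
  exact hkey

lemma hasDerivAt_J1 {x : ℝ} (hx : x ≠ 0) :
    HasDerivAt besselJ1 (besselJ0 x - besselJ1 x / x) x := by
  have h := (hasDerivAt_xJ1 x).div (hasDerivAt_id x) hx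
  have hev : besselJ1 =ᶠ[nhds x] (fun y => y * besselJ1 y / y) := by
    filter_upwards [eventually_ne_nhds hx] with y hy
    field_simp
  have h2 := h.congr_of_eventuallyEq hev
  refine h2.congr_deriv ?_
  simp only [id]
  field_simp

noncomputable def besselE (x : ℝ) : ℝ :=
  x * (besselJ0 x^2 + besselJ1 x^2) - besselJ0 x * besselJ1 x + besselJ0 x^2 / (2*x)

lemma hasDerivAt_E {x : ℝ} (hx : 0 < x) :
    HasDerivAt besselE (-(besselJ0 x)^2/(2*x^2)) x := by
  have hx0 : x ≠ 0 := ne_of_gt hx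
  have h0 := hasDerivAt_J0 x
  have h1 := hasDerivAt_J1 hx0
  have hsq0 : HasDerivAt (fun y => besselJ0 y^2) (2 * besselJ0 x * (-besselJ1 x)) x := by
    have := h0.fun_pow 2
    refine this.congr_deriv ?_
    push_cast
    ring
  have hsq1 : HasDerivAt (fun y => besselJ1 y^2)
      (2 * besselJ1 x * (besselJ0 x - besselJ1 x / x)) x := by
    have := h1.fun_pow 2
    refine this.congr_deriv ?_
    push_cast
    ring
  have hA := (hasDerivAt_id x).mul (hsq0.add hsq1)
  have hB := h0.mul h1
  have hden : HasDerivAt (fun y : ℝ => 2*y) 2 x := by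
    simpa using (hasDerivAt_id x).const_mul (2:ℝ)
  have hC := hsq0.div hden (by positivity)
  have hcomb := (hA.sub hB).add hC
  have hfun : besselE = fun y =>
      y * (besselJ0 y^2 + besselJ1 y^2) - besselJ0 y * besselJ1 y + besselJ0 y^2 / (2*y) := rfl
  rw [hfun]
  refine hcomb.congr_deriv ?_
  simp only [id, Pi.add_apply]
  field_simp
  ring

lemma E_antitone : AntitoneOn besselE (Set.Ici 2) := by
  apply antitoneOn_of_deriv_nonpos (convex_Ici 2)
  · intro y hy
    have hy0 : (0:ℝ) < y := lt_of_lt_of_le two_pos hy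
    exact ((hasDerivAt_E hy0).continuousAt).continuousWithinAt
  · intro y hy
    rw [interior_Ici] at hy
    have hy0 : (0:ℝ) < y := lt_trans two_pos hy
    exact ((hasDerivAt_E hy0).differentiableAt).differentiableWithinAt
  · intro y hy
    rw [interior_Ici] at hy
    have hy0 : (0:ℝ) < y := lt_trans two_pos hy
    rw [(hasDerivAt_E hy0).deriv]
    apply div_nonpos_of_nonpos_of_nonneg
    · simpa using sq_nonneg (besselJ0 y)
    · positivity

set_option maxHeartbeats 1000000 in
theorem stmt13 (x : ℝ) (hx : 0 ≤ x) :
    |besselJ0 x| ≤ (1 + x^2) ^ (-(1/4) : ℝ) := by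
  have hpos : (0:ℝ) < 1 + x^2 := by positivity
  have hmain : besselJ0 x^4 * (1 + x^2) ≤ 1 := by
    rcases le_or_gt x 2 with hle | hgt
    · set t : ℝ := x^2/4 with ht
      have ht0 : 0 ≤ t := by positivity
      have ht1 : t ≤ 1 := by rw [ht]; nlinarith
      have happ := J0_approx hx hle
      have hp : 1 - x^2/4 + x^4/64 = 1 - t + t^2/4 := by rw [ht]; ring
      have hD : (x^2/4)^3 * (4/135) = t^3*(4/135) := by rw [ht]
      rw [hp, hD] at happ
      have hpnn : 0 ≤ 1 - t + t^2/4 := by nlinarith [sq_nonneg (1 - t/2)]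
      have habs : |besselJ0 x| ≤ 1 - t + t^2/4 + t^3*(4/135) := by
        have h2 : |1 - t + t^2/4| = 1 - t + t^2/4 := abs_of_nonneg hpnn
        calc |besselJ0 x| = |(besselJ0 x - (1-t+t^2/4)) + (1-t+t^2/4)| := by ring_nf
          _ ≤ |besselJ0 x - (1-t+t^2/4)| + |1-t+t^2/4| := abs_add_le _ _
          _ ≤ t^3*(4/135) + (1-t+t^2/4) := by rw [h2]; linarith [happ]
          _ = 1 - t + t^2/4 + t^3*(4/135) := by ring
      have hr : |besselJ0 x| ≤ 1 - t + (3/10)*t^2 := by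
        have hq : t^2/4 + t^3*(4/135) ≤ (3/10)*t^2 := by nlinarith [pow_nonneg ht0 2]
        linarith
      have hr0 : 0 ≤ 1 - t + (3/10)*t^2 := by nlinarith
      have h4 : besselJ0 x^4 ≤ (1 - t + (3/10)*t^2)^4 := by
        have h1 : besselJ0 x^4 = |besselJ0 x|^4 := by
          rw [pow_abs, abs_of_nonneg (by positivity : (0:ℝ) ≤ besselJ0 x^4)]
        rw [h1]
        exact pow_le_pow_left₀ (abs_nonneg _) hr 4
      have hkey : (1 - t + (3/10)*t^2)^4 * (1 + 4*t) ≤ 1 := by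
        nlinarith [sq_nonneg t, sq_nonneg (1-t), pow_nonneg ht0 3, pow_nonneg ht0 4,
          sq_nonneg (t*(1-t)), mul_nonneg ht0 (sub_nonneg.2 ht1), sq_nonneg (t^2*(1-t)),
          mul_nonneg (mul_nonneg ht0 ht0) (sub_nonneg.2 ht1)]
      have h1x : 1 + x^2 = 1 + 4*t := by rw [ht]; ring
      rw [h1x]
      calc besselJ0 x^4 * (1+4*t) ≤ (1 - t + (3/10)*t^2)^4 * (1+4*t) :=
            mul_le_mul_of_nonneg_right h4 (by linarith)
        _ ≤ 1 := hkey
    · have hx0 : (0:ℝ) < x := by linarith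
      obtain ⟨hJ0l, hJ0u⟩ := J0_two_bounds
      obtain ⟨hJ1l, hJ1u⟩ := J1_two_bounds
      have hE2 : besselE 2 ≤ 87/100 := by
        unfold besselE
        norm_num at hJ0u hJ1u ⊢
        nlinarith [mul_nonneg hJ0l hJ1l, sq_nonneg (besselJ0 2), sq_nonneg (besselJ1 2)]
      have hEx : besselE x ≤ besselE 2 :=
        E_antitone (by norm_num : (2:ℝ) ∈ Set.Ici 2) (by exact hgt.le) hgt.le
      have h4x : besselJ0 x^2 * (4*x^2+1) ≤ 4*x*besselE x := by
        have hexp : 4*x*besselE x = 4*x^2*(besselJ0 x^2 + besselJ1 x^2)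
            - 4*x*(besselJ0 x*besselJ1 x) + 2*besselJ0 x^2 := by
          unfold besselE
          field_simp
          ring
        rw [hexp]
        nlinarith [sq_nonneg (2*x*besselJ1 x - besselJ0 x)]
      have hs : besselJ0 x^2*(4*x^2+1) ≤ (87/25)*x := by
        calc besselJ0 x^2*(4*x^2+1) ≤ 4*x*besselE x := h4x
          _ ≤ 4*x*(87/100) := by
              apply mul_le_mul_of_nonneg_left (hEx.trans hE2) (by positivity)
          _ = (87/25)*x := by ring
      have hx2 : (4:ℝ) ≤ x^2 := by nlinarith
      have hsq : (besselJ0 x^2*(4*x^2+1))^2 ≤ ((87/25)*x)^2 :=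
        pow_le_pow_left₀ (by positivity) hs 2
      have hsq' : besselJ0 x^4*(4*x^2+1)^2 ≤ (87/25)^2*x^2 := by nlinarith [hsq]
      have h16 : (87/25)^2*x^2*(1+x^2) ≤ (4*x^2+1)^2 := by
        nlinarith [mul_le_mul_of_nonneg_left hx2 (sq_nonneg x)]
      have hA : besselJ0 x^4*(4*x^2+1)^2*(1+x^2) ≤ (87/25)^2*x^2*(1+x^2) :=
        mul_le_mul_of_nonneg_right hsq' (by positivity)
      have hB : besselJ0 x^4*(4*x^2+1)^2*(1+x^2) ≤ (4*x^2+1)^2 := hA.trans h16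
      nlinarith [hB, sq_nonneg (2*x^2),
        mul_pos (mul_pos (by positivity : (0:ℝ) < 4*x^2+1)
          (by positivity : (0:ℝ) < 4*x^2+1)) (by positivity : (0:ℝ) < 1+x^2)]
  have hb4 : ((1+x^2) ^ (-(1/4):ℝ))^(4:ℕ) = (1+x^2)⁻¹ := by
    rw [← Real.rpow_natCast ((1+x^2) ^ (-(1/4):ℝ)) 4, ← Real.rpow_mul hpos.le]
    norm_num
    rw [Real.rpow_neg_one]
  have h4' : |besselJ0 x|^(4:ℕ) ≤ ((1+x^2) ^ (-(1/4):ℝ))^(4:ℕ) := by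
    rw [hb4]
    have heq : |besselJ0 x|^(4:ℕ) = besselJ0 x^4 := by
      rw [pow_abs, abs_of_nonneg (by positivity : (0:ℝ) ≤ besselJ0 x^4)]
    rw [heq, inv_eq_one_div, le_div_iff₀ hpos]
    exact hmain
  exact (pow_le_pow_iff_left₀ (abs_nonneg _)
    (Real.rpow_nonneg hpos.le _) (by norm_num)).1 h4'
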